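/- Let T be a finitely aligned k-semigraph in which every element of T^(0) is idempotent, and let Δ = T ⊔ Δ_μ be the associated left-cancellative semimultiplicative set with operators λ_a (a ∈ Δ) on ℓ²(Δ). Then for all x,y ∈ T the Cuntz–Krieger type relation holds: λ_x* λ_y = Σ_{(e,f) ∈ T^min(x,y)} λ_e (λ_{yf}* λ_{yf}) λ_f* (a finite sum). -/

import Mathlib

/-- A semimultiplicative set: a partially defined associative multiplication,
encoded via `Option`: `mul s t = some u` means "`st` is defined and equals `u`". -/
structure SemimultSet (T : Type*) where
  mul : T → T → Option T
  assoc : ∀ s t u : T,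
    (mul s t).bind (fun x => mul x u) = (mul t u).bind (fun y => mul s y)

/-- A `k`-semigraph: a semimultiplicative set with a degree map `d : T → ℕ^k`
satisfying the unique factorisation property. -/
structure Semigraph (k : Type*) (T : Type*) extends SemimultSet T where
  d : T → k → ℕ
  deg_mul : ∀ x y z : T, mul x y = some z → d z = d x + d y
  factor : ∀ (x : T) (n₁ n₂ : k → ℕ), d x = n₁ + n₂ →
    ∃! p : T × T, mul p.1 p.2 = some x ∧ d p.1 = n₁ ∧ d p.2 = n₂

namespace Semigraph

variable {k T : Type*}

/-- `s ≤ t` iff there is `α` with `αs` defined and `αs = t`. -/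
def le (S : Semigraph k T) (s t : T) : Prop := ∃ α : T, S.mul α s = some t

/-- The set `Δ_μ` of tuples `yμ_{α₁,…,αₙ}` (`n ≥ 1`) with `y ≤ αᵢ` for some `i`. -/
def DeltaMu (S : Semigraph k T) : Type _ :=
  { p : T × List T // p.2 ≠ [] ∧ ∃ α ∈ p.2, S.le p.1 α }

/-- `Δ = T ⊔ Δ_μ`. -/
def Delta (S : Semigraph k T) : Type _ := T ⊕ S.DeltaMu

open scoped Classical in
/-- The partial multiplication on `Δ`: products within `T` as in `T`, and
`x · (yμ_α) = (xy)μ_α` whenever `xy` is defined and `(xy)μ_α ∈ Δ_μ`;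
all other products are undefined. -/
noncomputable def deltaMul (S : Semigraph k T) : S.Delta → S.Delta → Option S.Delta
  | Sum.inl x, Sum.inl y => (S.mul x y).map Sum.inl
  | Sum.inl x, Sum.inr ⟨(y, l), hp⟩ =>
      match S.mul x y with
      | some z =>
          if h : ∃ α ∈ l, S.le z α then some (Sum.inr ⟨(z, l), ⟨hp.1, h⟩⟩)
          else none
      | none => none
  | Sum.inr _, _ => none

/-- The minimal common extension set `T^min(x,y)`. -/
def Tmin (S : Semigraph k T) (x y : T) : Set (T × T) :=
  { p | ∃ z : T, S.mul x p.1 = some z ∧ S.mul y p.2 = some z ∧ S.d z = S.d x ⊔ S.d y }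
variable (S : Semigraph k T)

lemma cancel_left {x a b z : T} (ha : S.mul x a = some z) (hb : S.mul x b = some z) :
    a = b := by
  have hda := S.deg_mul _ _ _ ha
  have hdb := S.deg_mul _ _ _ hb
  have hd : S.d b = S.d a := by
    funext i
    have h1 := congrFun hda i
    have h2 := congrFun hdb i
    simp only [Pi.add_apply] at h1 h2
    omega
  obtain ⟨p, _, hu⟩ := S.factor z (S.d x) (S.d a) hda
  have h1 := hu (x, a) ⟨ha, rfl, rfl⟩
  have h2 := hu (x, b) ⟨hb, rfl, hd⟩
  exact congrArg Prod.snd (h1.trans h2.symm)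

lemma assoc_right {a b c ab w : T} (h1 : S.mul a b = some ab) (h2 : S.mul ab c = some w) :
    ∃ bc, S.mul b c = some bc ∧ S.mul a bc = some w := by
  have h := S.assoc a b c
  rw [h1] at h
  simp only [Option.bind_some] at h
  rw [h2] at h
  cases hbc : S.mul b c with
  | none => rw [hbc] at h; simp at h
  | some bc => rw [hbc] at h; simp only [Option.bind_some] at h; exact ⟨bc, rfl, h.symm⟩

lemma assoc_left {a b c bc w : T} (h1 : S.mul b c = some bc) (h2 : S.mul a bc = some w) :
    ∃ ab, S.mul a b = some ab ∧ S.mul ab c = some w := by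
  have h := S.assoc a b c
  rw [h1] at h
  simp only [Option.bind_some] at h
  rw [h2] at h
  cases hab : S.mul a b with
  | none => rw [hab] at h; simp at h
  | some ab => rw [hab] at h; simp only [Option.bind_some] at h; exact ⟨ab, rfl, h⟩

lemma le_of_mul {a r c : T} (h : S.mul a r = some c) : S.le r c := ⟨a, h⟩

lemma le_trans' {u v w : T} (h1 : S.le u v) (h2 : S.le v w) : S.le u w := by
  obtain ⟨a, ha⟩ := h1
  obtain ⟨b, hb⟩ := h2
  obtain ⟨ab, _, h4⟩ := S.assoc_left ha hb
  exact ⟨ab, h4⟩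

lemma exists_min {x y u t z : T} (hx : S.mul x u = some z) (hy : S.mul y t = some z) :
    ∃ e f m r, S.mul x e = some m ∧ S.mul y f = some m ∧ S.d m = S.d x ⊔ S.d y ∧
      S.mul e r = some u ∧ S.mul f r = some t ∧ S.mul m r = some z := by
  have hdz₁ := S.deg_mul _ _ _ hx
  have hdz₂ := S.deg_mul _ _ _ hy
  have hsplit : S.d z = (S.d x ⊔ S.d y) + fun i => S.d z i - (S.d x ⊔ S.d y) i := by
    funext i
    have h1 := congrFun hdz₁ i
    have h2 := congrFun hdz₂ i
    have hm : (S.d x ⊔ S.d y) i = max (S.d x i) (S.d y i) := rfl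
    simp only [Pi.add_apply] at h1 h2 ⊢
    rw [hm]
    omega
  obtain ⟨⟨m, r⟩, ⟨hmr, hdm, hdr⟩, _⟩ := S.factor z _ _ hsplit
  dsimp only at hmr hdm hdr
  have hdmx : S.d m = S.d x + fun i => S.d m i - S.d x i := by
    funext i
    have hm : (S.d x ⊔ S.d y) i = max (S.d x i) (S.d y i) := rfl
    have h3 := congrFun hdm i
    rw [hm] at h3
    simp only [Pi.add_apply]
    omega
  have hdmy : S.d m = S.d y + fun i => S.d m i - S.d y i := by
    funext i
    have hm : (S.d x ⊔ S.d y) i = max (S.d x i) (S.d y i) := rfl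
    have h3 := congrFun hdm i
    rw [hm] at h3
    simp only [Pi.add_apply]
    omega
  obtain ⟨⟨x', e⟩, ⟨hxe, hdx', hde⟩, _⟩ := S.factor m (S.d x) _ hdmx
  dsimp only at hxe hdx' hde
  obtain ⟨⟨y', f⟩, ⟨hyf, hdy', hdf⟩, _⟩ := S.factor m (S.d y) _ hdmy
  dsimp only at hyf hdy' hdf
  obtain ⟨er, her, hxer⟩ := S.assoc_right hxe hmr
  obtain ⟨fr, hfr, hyfr⟩ := S.assoc_right hyf hmr
  have hdu : S.d er = S.d u := by
    have e1 := S.deg_mul _ _ _ hxer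
    funext i
    have a1 := congrFun e1 i
    have a2 := congrFun hdz₁ i
    have a3 := congrFun hdx' i
    simp only [Pi.add_apply] at a1 a2
    omega
  obtain ⟨q, _, hqu⟩ := S.factor z (S.d x) (S.d u) hdz₁
  have h1 := hqu (x', er) ⟨hxer, hdx', hdu⟩
  have h2 := hqu (x, u) ⟨hx, rfl, rfl⟩
  have h12 := h1.trans h2.symm
  have hx'x : x' = x := congrArg Prod.fst h12
  have heru : er = u := congrArg Prod.snd h12
  have hdt : S.d fr = S.d t := by
    have e1 := S.deg_mul _ _ _ hyfr
    funext i
    have a1 := congrFun e1 i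
    have a2 := congrFun hdz₂ i
    have a3 := congrFun hdy' i
    simp only [Pi.add_apply] at a1 a2
    omega
  obtain ⟨q', _, hqu'⟩ := S.factor z (S.d y) (S.d t) hdz₂
  have h1' := hqu' (y', fr) ⟨hyfr, hdy', hdt⟩
  have h2' := hqu' (y, t) ⟨hy, rfl, rfl⟩
  have h12' := h1'.trans h2'.symm
  have hy'y : y' = y := congrArg Prod.fst h12'
  have hfrt : fr = t := congrArg Prod.snd h12'
  exact ⟨e, f, m, r, hx'x ▸ hxe, hy'y ▸ hyf, hdm, heru ▸ her, hfrt ▸ hfr, hmr⟩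

lemma min_unique {x y z e f m r e' f' m' r' : T}
    (hxe : S.mul x e = some m) (hyf : S.mul y f = some m) (hdm : S.d m = S.d x ⊔ S.d y)
    (hmr : S.mul m r = some z)
    (hxe' : S.mul x e' = some m') (hyf' : S.mul y f' = some m') (hdm' : S.d m' = S.d x ⊔ S.d y)
    (hmr' : S.mul m' r' = some z) :
    e = e' ∧ f = f' ∧ r = r' := by
  have hdz := S.deg_mul _ _ _ hmr
  have hdz' := S.deg_mul _ _ _ hmr'
  have hdr : S.d r' = S.d r := by
    funext i
    have a1 := congrFun hdz i
    have a2 := congrFun hdz' i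
    have a3 := congrFun hdm i
    have a4 := congrFun hdm' i
    simp only [Pi.add_apply] at a1 a2
    omega
  rw [hdm] at hdz
  obtain ⟨q, _, hqu⟩ := S.factor z (S.d x ⊔ S.d y) (S.d r) hdz
  have h1 := hqu (m, r) ⟨hmr, hdm, rfl⟩
  have h2 := hqu (m', r') ⟨hmr', hdm', hdr⟩
  have h12 := h1.trans h2.symm
  have hmm : m = m' := congrArg Prod.fst h12
  have hrr : r = r' := congrArg Prod.snd h12
  subst hmm
  have hde : S.d e' = S.d e := by
    have a1 := S.deg_mul _ _ _ hxe
    have a2 := S.deg_mul _ _ _ hxe'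
    funext i
    have b1 := congrFun a1 i
    have b2 := congrFun a2 i
    simp only [Pi.add_apply] at b1 b2
    omega
  obtain ⟨qe, _, hque⟩ := S.factor m (S.d x) (S.d e) (S.deg_mul _ _ _ hxe)
  have he1 := hque (x, e) ⟨hxe, rfl, rfl⟩
  have he2 := hque (x, e') ⟨hxe', rfl, hde⟩
  have hee : e = e' := congrArg Prod.snd (he1.trans he2.symm)
  have hdf : S.d f' = S.d f := by
    have a1 := S.deg_mul _ _ _ hyf
    have a2 := S.deg_mul _ _ _ hyf'
    funext i
    have b1 := congrFun a1 i
    have b2 := congrFun a2 i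
    simp only [Pi.add_apply] at b1 b2
    omega
  obtain ⟨qf, _, hquf⟩ := S.factor m (S.d y) (S.d f) (S.deg_mul _ _ _ hyf)
  have hf1 := hquf (y, f) ⟨hyf, rfl, rfl⟩
  have hf2 := hquf (y, f') ⟨hyf', rfl, hdf⟩
  have hff : f = f' := congrArg Prod.snd (hf1.trans hf2.symm)
  exact ⟨hee, hff, hrr⟩


section DeltaLemmas
open scoped Classical

lemma deltaMul_inl_inl (x y : T) :
    S.deltaMul (Sum.inl x) (Sum.inl y) = (S.mul x y).map Sum.inl := rfl

lemma deltaMul_inr (a : S.DeltaMu) (b : S.Delta) : S.deltaMul (Sum.inr a) b = none := by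
  cases b with
  | inl t => rfl
  | inr q => obtain ⟨⟨w, l⟩, h⟩ := q; rfl

lemma deltaMul_inl_inr_eq (x w : T) (l : List T) (hp) :
    S.deltaMul (Sum.inl x) (Sum.inr ⟨(w, l), hp⟩) =
      (S.mul x w).bind (fun z =>
        if hle : ∃ α ∈ l, S.le z α then some (Sum.inr ⟨(z, l), ⟨hp.1, hle⟩⟩) else none) := by
  simp only [Semigraph.deltaMul]
  cases hmul : S.mul x w <;> simp [hmul] <;> rfl

lemma deltaMul_inl_inr_intro {x w z : T} {l : List T} (hp) (hz : S.mul x w = some z)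
    (hle : ∃ α ∈ l, S.le z α) :
    S.deltaMul (Sum.inl x) (Sum.inr ⟨(w, l), hp⟩) = some (Sum.inr ⟨(z, l), ⟨hp.1, hle⟩⟩) := by
  rw [S.deltaMul_inl_inr_eq, hz, Option.bind_some, dif_pos hle]

lemma deltaMul_inl_inr_elim {x w : T} {l : List T} {hp} {c : S.Delta}
    (h : S.deltaMul (Sum.inl x) (Sum.inr ⟨(w, l), hp⟩) = some c) :
    ∃ z, S.mul x w = some z ∧ ∃ hle : ∃ α ∈ l, S.le z α,
      c = Sum.inr ⟨(z, l), ⟨hp.1, hle⟩⟩ := by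
  rw [S.deltaMul_inl_inr_eq] at h
  cases hz : S.mul x w with
  | none => rw [hz, Option.bind_none] at h; exact absurd h (by simp)
  | some z =>
    rw [hz, Option.bind_some] at h
    by_cases hle : ∃ α ∈ l, S.le z α
    · rw [dif_pos hle] at h
      exact ⟨z, rfl, hle, (Option.some.inj h).symm⟩
    · rw [dif_neg hle] at h
      exact absurd h (by simp)

lemma deltaMul_inl_inl_elim {x w : T} {c : S.Delta}
    (h : S.deltaMul (Sum.inl x) (Sum.inl w) = some c) :
    ∃ z, S.mul x w = some z ∧ c = Sum.inl z := by
  rw [deltaMul_inl_inl] at h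
  cases hz : S.mul x w with
  | none => rw [hz] at h; exact absurd h (by simp)
  | some z => rw [hz] at h; exact ⟨z, rfl, (Option.some.inj h).symm⟩

lemma delta_cancel {s a b w : S.Delta}
    (ha : S.deltaMul s a = some w) (hb : S.deltaMul s b = some w) : a = b := by
  cases s with
  | inr q => rw [S.deltaMul_inr] at ha; exact absurd ha (by simp)
  | inl x =>
    cases a with
    | inl a0 =>
      obtain ⟨z, hz, rfl⟩ := S.deltaMul_inl_inl_elim ha
      cases b with
      | inl b0 =>
        obtain ⟨z', hz', hzz⟩ := S.deltaMul_inl_inl_elim hb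
        have : z' = z := Sum.inl.inj hzz.symm
        subst this
        rw [S.cancel_left hz hz']
      | inr q =>
        obtain ⟨⟨b0, l⟩, hq⟩ := q
        obtain ⟨z', hz', hle, hzz⟩ := S.deltaMul_inl_inr_elim hb
        exact absurd hzz (by simp)
    | inr q =>
      obtain ⟨⟨a0, l⟩, hq⟩ := q
      obtain ⟨z, hz, hle, rfl⟩ := S.deltaMul_inl_inr_elim ha
      cases b with
      | inl b0 =>
        obtain ⟨z', hz', hzz⟩ := S.deltaMul_inl_inl_elim hb
        exact absurd hzz (by simp)
      | inr q' =>
        obtain ⟨⟨b0, l'⟩, hq'⟩ := q'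
        obtain ⟨z', hz', hle', hzz⟩ := S.deltaMul_inl_inr_elim hb
        have h2 : ((z, l) : T × List T) = (z', l') := congrArg Subtype.val (Sum.inr.inj hzz)
        injection h2 with hz2 hl2
        subst hz2
        subst hl2
        have hab : a0 = b0 := S.cancel_left hz hz'
        subst hab
        rfl

end DeltaLemmas

section Comb
variable {x y : T}

lemma comb_sound {e f z' : T} {r c b w : S.Delta}
    (hef : (e, f) ∈ S.Tmin x y) (hz' : S.mul y f = some z')
    (hc : S.deltaMul (Sum.inl e) r = some c) (hb : S.deltaMul (Sum.inl f) r = some b)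
    (hw : S.deltaMul (Sum.inl z') r = some w) :
    S.deltaMul (Sum.inl x) c = some w ∧ S.deltaMul (Sum.inl y) b = some w := by
  obtain ⟨m, hxe, hyf, hdm⟩ := hef
  dsimp only at hxe hyf
  have hzm : z' = m := Option.some.inj (hz'.symm.trans hyf)
  subst hzm
  cases r with
  | inl r0 =>
    obtain ⟨c0, hc0, rfl⟩ := S.deltaMul_inl_inl_elim hc
    obtain ⟨b0, hb0, rfl⟩ := S.deltaMul_inl_inl_elim hb
    obtain ⟨w0, hw0, rfl⟩ := S.deltaMul_inl_inl_elim hw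
    obtain ⟨er, her, hxer⟩ := S.assoc_right hxe hw0
    have hec : er = c0 := Option.some.inj (her.symm.trans hc0)
    subst hec
    obtain ⟨fr, hfr, hyfr⟩ := S.assoc_right hyf hw0
    have hfb : fr = b0 := Option.some.inj (hfr.symm.trans hb0)
    subst hfb
    constructor
    · rw [S.deltaMul_inl_inl, hxer]; rfl
    · rw [S.deltaMul_inl_inl, hyfr]; rfl
  | inr q =>
    obtain ⟨⟨r0, l⟩, hr⟩ := q
    obtain ⟨c0, hc0, hlec, rfl⟩ := S.deltaMul_inl_inr_elim hc
    obtain ⟨b0, hb0, hleb, rfl⟩ := S.deltaMul_inl_inr_elim hb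
    obtain ⟨w0, hw0, hlew, rfl⟩ := S.deltaMul_inl_inr_elim hw
    obtain ⟨er, her, hxer⟩ := S.assoc_right hxe hw0
    have hec : er = c0 := Option.some.inj (her.symm.trans hc0)
    subst hec
    obtain ⟨fr, hfr, hyfr⟩ := S.assoc_right hyf hw0
    have hfb : fr = b0 := Option.some.inj (hfr.symm.trans hb0)
    subst hfb
    exact ⟨S.deltaMul_inl_inr_intro _ hxer hlew, S.deltaMul_inl_inr_intro _ hyfr hlew⟩

lemma comb_complete {c b w : S.Delta}
    (hxc : S.deltaMul (Sum.inl x) c = some w) (hyb : S.deltaMul (Sum.inl y) b = some w) :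
    ∃ (e f z' : T) (r w' : S.Delta), (e, f) ∈ S.Tmin x y ∧ S.mul y f = some z' ∧
      S.deltaMul (Sum.inl e) r = some c ∧ S.deltaMul (Sum.inl f) r = some b ∧
      S.deltaMul (Sum.inl z') r = some w' := by
  cases c with
  | inl c0 =>
    obtain ⟨z0, hxc0, rfl⟩ := S.deltaMul_inl_inl_elim hxc
    cases b with
    | inl b0 =>
      obtain ⟨z0', hyb0, hzz⟩ := S.deltaMul_inl_inl_elim hyb
      have hz00 : z0' = z0 := Sum.inl.inj hzz.symm
      rw [hz00] at hyb0
      obtain ⟨e, f, m, r0, hxem, hyfm, hdm, her, hfr, hmr⟩ := S.exists_min hxc0 hyb0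
      refine ⟨e, f, m, Sum.inl r0, Sum.inl z0, ⟨m, hxem, hyfm, hdm⟩, hyfm, ?_, ?_, ?_⟩ <;>
        · rw [S.deltaMul_inl_inl]
          first
            | rw [her]; rfl
            | rw [hfr]; rfl
            | rw [hmr]; rfl
    | inr q =>
      obtain ⟨⟨b0, l2⟩, hpb⟩ := q
      obtain ⟨z0', hyb0, hle', hzz⟩ := S.deltaMul_inl_inr_elim hyb
      exact absurd hzz (by simp)
  | inr q =>
    obtain ⟨⟨c0, l⟩, hpc⟩ := q
    obtain ⟨z0, hxc0, hle0, rfl⟩ := S.deltaMul_inl_inr_elim hxc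
    cases b with
    | inl b0 =>
      obtain ⟨z0', hyb0, hzz⟩ := S.deltaMul_inl_inl_elim hyb
      exact absurd hzz (by simp)
    | inr q' =>
      obtain ⟨⟨b0, l2⟩, hpb⟩ := q'
      obtain ⟨z0', hyb0, hle0', hzz⟩ := S.deltaMul_inl_inr_elim hyb
      have h2 : ((z0, l) : T × List T) = (z0', l2) := congrArg Subtype.val (Sum.inr.inj hzz)
      injection h2 with hz2 hl2
      subst hz2
      subst hl2
      obtain ⟨e, f, m, r0, hxem, hyfm, hdm, her, hfr, hmr⟩ := S.exists_min hxc0 hyb0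
      obtain ⟨α, hαl, hα⟩ := hle0
      have hler0 : ∃ α ∈ l, S.le r0 α :=
        ⟨α, hαl, S.le_trans' (S.le_trans' (S.le_of_mul her) (S.le_of_mul hxc0)) hα⟩
      refine ⟨e, f, m, Sum.inr ⟨(r0, l), ⟨hpc.1, hler0⟩⟩, _, ⟨m, hxem, hyfm, hdm⟩, hyfm,
        ?_, ?_, S.deltaMul_inl_inr_intro _ hmr ⟨α, hαl, hα⟩⟩
      · exact S.deltaMul_inl_inr_intro _ her ⟨α, hαl, S.le_trans' (S.le_of_mul hxc0) hα⟩
      · exact S.deltaMul_inl_inr_intro _ hfr ⟨α, hαl, S.le_trans' (S.le_of_mul hyb0) hα⟩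

lemma comb_unique {e f z1 e' f' z2 : T} {r r' c b w w' : S.Delta}
    (h1 : (e, f) ∈ S.Tmin x y) (hz1 : S.mul y f = some z1)
    (hc : S.deltaMul (Sum.inl e) r = some c) (hb : S.deltaMul (Sum.inl f) r = some b)
    (hw : S.deltaMul (Sum.inl z1) r = some w)
    (h2 : (e', f') ∈ S.Tmin x y) (hz2 : S.mul y f' = some z2)
    (hc' : S.deltaMul (Sum.inl e') r' = some c) (hb' : S.deltaMul (Sum.inl f') r' = some b)
    (hw' : S.deltaMul (Sum.inl z2) r' = some w') :
    e = e' ∧ f = f' := by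
  obtain ⟨m, hxe, hyf, hdm⟩ := h1
  dsimp only at hxe hyf
  have hzm : z1 = m := Option.some.inj (hz1.symm.trans hyf)
  subst hzm
  obtain ⟨m', hxe', hyf', hdm'⟩ := h2
  dsimp only at hxe' hyf'
  have hzm' : z2 = m' := Option.some.inj (hz2.symm.trans hyf')
  subst hzm'
  cases r with
  | inl r0 =>
    obtain ⟨c0, hc0, rfl⟩ := S.deltaMul_inl_inl_elim hc
    obtain ⟨b0, hb0, rfl⟩ := S.deltaMul_inl_inl_elim hb
    obtain ⟨w0, hw0, rfl⟩ := S.deltaMul_inl_inl_elim hw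
    cases r' with
    | inr q =>
      obtain ⟨⟨r0', l'⟩, hpr'⟩ := q
      obtain ⟨cc, hcc, hlecc, hzz⟩ := S.deltaMul_inl_inr_elim hc'
      exact absurd hzz (by simp)
    | inl r0' =>
      obtain ⟨c0', hc0', hcc⟩ := S.deltaMul_inl_inl_elim hc'
      rw [show c0' = c0 from Sum.inl.inj hcc.symm] at hc0'
      obtain ⟨b0', hb0', hbb⟩ := S.deltaMul_inl_inl_elim hb'
      rw [show b0' = b0 from Sum.inl.inj hbb.symm] at hb0'
      obtain ⟨w0', hw0', rfl⟩ := S.deltaMul_inl_inl_elim hw'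
      obtain ⟨er, her, hxer⟩ := S.assoc_right hxe hw0
      rw [Option.some.inj (her.symm.trans hc0)] at hxer
      obtain ⟨er', her', hxer'⟩ := S.assoc_right hxe' hw0'
      rw [Option.some.inj (her'.symm.trans hc0')] at hxer'
      rw [Option.some.inj (hxer'.symm.trans hxer)] at hw0'
      obtain ⟨hee, hff, -⟩ := S.min_unique hxe hyf hdm hw0 hxe' hyf' hdm' hw0'
      exact ⟨hee, hff⟩
  | inr q =>
    obtain ⟨⟨r0, l⟩, hpr⟩ := q
    obtain ⟨c0, hc0, hlec, rfl⟩ := S.deltaMul_inl_inr_elim hc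
    obtain ⟨b0, hb0, hleb, rfl⟩ := S.deltaMul_inl_inr_elim hb
    obtain ⟨w0, hw0, hlew, rfl⟩ := S.deltaMul_inl_inr_elim hw
    cases r' with
    | inl r0' =>
      obtain ⟨cc, hcc, hzz⟩ := S.deltaMul_inl_inl_elim hc'
      exact absurd hzz (by simp)
    | inr q' =>
      obtain ⟨⟨r0', l'⟩, hpr'⟩ := q'
      obtain ⟨c0', hc0', hlec', hcc⟩ := S.deltaMul_inl_inr_elim hc'
      have h2c : ((c0, l) : T × List T) = (c0', l') := congrArg Subtype.val (Sum.inr.inj hcc)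
      injection h2c with hcv hlv
      rw [← hcv] at hc0'
      subst hlv
      obtain ⟨b0', hb0', hleb', hbb⟩ := S.deltaMul_inl_inr_elim hb'
      have h2b : ((b0, l) : T × List T) = (b0', l) := congrArg Subtype.val (Sum.inr.inj hbb)
      injection h2b with hbv hlv2
      rw [← hbv] at hb0'
      obtain ⟨w0', hw0', hlew', rfl⟩ := S.deltaMul_inl_inr_elim hw'
      obtain ⟨er, her, hxer⟩ := S.assoc_right hxe hw0
      rw [Option.some.inj (her.symm.trans hc0)] at hxer
      obtain ⟨er', her', hxer'⟩ := S.assoc_right hxe' hw0'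
      rw [Option.some.inj (her'.symm.trans hc0')] at hxer'
      rw [Option.some.inj (hxer'.symm.trans hxer)] at hw0'
      obtain ⟨hee, hff, -⟩ := S.min_unique hxe hyf hdm hw0 hxe' hyf' hdm' hw0'
      exact ⟨hee, hff⟩

end Comb

end Semigraph

/-- The canonical basis vector `δ_t` of `ℓ²(G)`. -/
noncomputable def deltaVec {G : Type*} (t : G) : lp (fun _ : G => ℂ) 2 :=
  haveI := Classical.decEq G
  lp.single 2 t 1

/-- `la` is the family of left translation operators associated to the partial
multiplication `m`: `la s δ_t = δ_{st}` if `st` is defined, and `0` otherwise. -/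
def IsLambdaFam {G : Type*} (m : G → G → Option G)
    (la : G → (lp (fun _ : G => ℂ) 2 →L[ℂ] lp (fun _ : G => ℂ) 2)) : Prop :=
  ∀ s t : G, la s (deltaVec t) = (m s t).elim 0 deltaVec

section Analysis
open scoped ComplexInnerProductSpace Classical
variable {G : Type*}

lemma deltaVec_apply (t u : G) : (deltaVec t) u = if u = t then (1 : ℂ) else 0 := by
  classical
  simp [deltaVec, lp.single_apply, eq_rec_constant, Pi.single_apply]

lemma inner_deltaVec_left (p : G) (v : lp (fun _ : G => ℂ) 2) :
    ⟪deltaVec p, v⟫ = v p := by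
  classical
  simp only [deltaVec]
  rw [lp.inner_single_left]
  simp [RCLike.inner_apply]

lemma vec_ext {v w : lp (fun _ : G => ℂ) 2}
    (h : ∀ p : G, ⟪deltaVec p, v⟫ = ⟪deltaVec p, w⟫) : v = w := by
  apply lp.ext
  funext p
  have := h p
  rwa [inner_deltaVec_left, inner_deltaVec_left] at this

lemma inner_deltaVec_deltaVec (a b : G) :
    ⟪deltaVec a, deltaVec b⟫ = if a = b then (1 : ℂ) else 0 := by
  rw [inner_deltaVec_left, deltaVec_apply]

lemma op_ext {A B : lp (fun _ : G => ℂ) 2 →L[ℂ] lp (fun _ : G => ℂ) 2}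
    (h : ∀ t : G, A (deltaVec t) = B (deltaVec t)) : A = B := by
  refine ContinuousLinearMap.ext fun f => ?_
  have hsingle : ∀ i : G, lp.single 2 i (f i) = f i • deltaVec i := by
    intro i
    simp only [deltaVec]
    rw [← lp.single_smul]
    norm_num
  have key : ∀ i : G, A (lp.single 2 i (f i)) = B (lp.single 2 i (f i)) := by
    intro i
    rw [hsingle, map_smul, map_smul, h]
  have hA : HasSum (fun i : G => A (lp.single 2 i (f i))) (A f) :=
    (lp.hasSum_single (by norm_num) f).mapL A
  have hB : HasSum (fun i : G => B (lp.single 2 i (f i))) (B f) :=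
    (lp.hasSum_single (by norm_num) f).mapL B
  exact hA.unique ((funext key : _) ▸ hB)

end Analysis

section Adjoint
open scoped ComplexInnerProductSpace Classical
variable {G : Type*} {m : G → G → Option G}
  {la : G → (lp (fun _ : G => ℂ) 2 →L[ℂ] lp (fun _ : G => ℂ) 2)}

lemma adj_none (hla : IsLambdaFam m la) {s c : G} (h : ∀ a, m s a ≠ some c) :
    ContinuousLinearMap.adjoint (la s) (deltaVec c) = 0 := by
  apply vec_ext
  intro p
  rw [ContinuousLinearMap.adjoint_inner_right, hla, inner_zero_right]
  cases h' : m s p with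
  | none => simp
  | some a =>
    simp only [Option.elim]
    rw [inner_deltaVec_deltaVec, if_neg]
    intro hac
    exact h p (hac ▸ h')

lemma adj_some (hla : IsLambdaFam m la)
    (hcanc : ∀ {s a b w : G}, m s a = some w → m s b = some w → a = b)
    {s a c : G} (h : m s a = some c) :
    ContinuousLinearMap.adjoint (la s) (deltaVec c) = deltaVec a := by
  apply vec_ext
  intro p
  rw [ContinuousLinearMap.adjoint_inner_right, hla]
  rw [inner_deltaVec_deltaVec]
  cases h' : m s p with
  | none =>
    simp only [Option.elim, inner_zero_left]
    rw [if_neg]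
    intro hpa
    subst hpa
    rw [h'] at h
    exact absurd h (by simp)
  | some w =>
    simp only [Option.elim]
    rw [inner_deltaVec_deltaVec]
    by_cases hpa : p = a
    · subst hpa
      rw [if_pos rfl, if_pos (Option.some.inj (h'.symm.trans h))]
    · rw [if_neg hpa, if_neg]
      intro hwc
      exact hpa (hcanc (hwc ▸ h') h)

lemma term_entry_zero (hla : IsLambdaFam m la)
    (hcanc : ∀ {s a b w : G}, m s a = some w → m s b = some w → a = b)
    {e f z' : G} {c b : G}
    (h : ∀ r w', m e r = some c → m f r = some b → m z' r = some w' → False) :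
    ⟪deltaVec c, (la e * (ContinuousLinearMap.adjoint (la z') * la z') *
        ContinuousLinearMap.adjoint (la f)) (deltaVec b)⟫ = 0 := by
  simp only [ContinuousLinearMap.mul_apply]
  by_cases hr : ∃ r, m f r = some b
  · obtain ⟨r, hrb⟩ := hr
    rw [adj_some hla hcanc hrb, hla]
    cases hw : m z' r with
    | none => simp
    | some w =>
      simp only [Option.elim]
      rw [adj_some hla hcanc hw, hla]
      cases hc' : m e r with
      | none => simp
      | some c'' =>
        simp only [Option.elim]
        rw [inner_deltaVec_deltaVec, if_neg]
        intro hcc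
        exact h r w (hcc ▸ hc') hrb hw
  · rw [adj_none hla (fun a ha => hr ⟨a, ha⟩)]
    simp

lemma term_entry_one (hla : IsLambdaFam m la)
    (hcanc : ∀ {s a b w : G}, m s a = some w → m s b = some w → a = b)
    {e f z' : G} {c b r w : G}
    (hc : m e r = some c) (hb : m f r = some b) (hw : m z' r = some w) :
    ⟪deltaVec c, (la e * (ContinuousLinearMap.adjoint (la z') * la z') *
        ContinuousLinearMap.adjoint (la f)) (deltaVec b)⟫ = 1 := by
  simp only [ContinuousLinearMap.mul_apply]
  rw [adj_some hla hcanc hb, hla, hw]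
  simp only [Option.elim]
  rw [adj_some hla hcanc hw, hla, hc]
  simp only [Option.elim]
  rw [inner_deltaVec_deltaVec, if_pos rfl]

end Adjoint

open scoped ComplexInnerProductSpace Classical in
/-- the Cuntz–Krieger type relation
`λ_x* λ_y = Σ_(e,f) ∈ Tmin(x,y) λ_e (λ_(yf)* λ_(yf)) λ_f*`. -/
theorem lambda_CK_relation {k T : Type*} (S : Semigraph k T)
    (hidem : ∀ e : T, S.d e = 0 → S.mul e e = some e)
    (hfin : ∀ x y : T, (S.Tmin x y).Finite)
    (la : S.Delta → (lp (fun _ : S.Delta => ℂ) 2 →L[ℂ] lp (fun _ : S.Delta => ℂ) 2))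
    (hla : IsLambdaFam S.deltaMul la) :
    ∀ x y : T,
      ContinuousLinearMap.adjoint (la (Sum.inl x)) * la (Sum.inl y) =
      ∑ p ∈ (hfin x y).toFinset,
        (S.mul y p.2).elim 0
          (fun z => la (Sum.inl p.1) *
            (ContinuousLinearMap.adjoint (la (Sum.inl z)) * la (Sum.inl z)) *
            ContinuousLinearMap.adjoint (la (Sum.inl p.2))) := by
  intro x y
  have hcanc : ∀ {s a b w : S.Delta}, S.deltaMul s a = some w → S.deltaMul s b = some w →
      a = b := fun ha hb => S.delta_cancel ha hb
  refine op_ext fun b => ?_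
  refine vec_ext fun c => ?_
  rw [ContinuousLinearMap.sum_apply, inner_sum, ContinuousLinearMap.mul_apply,
    ContinuousLinearMap.adjoint_inner_right, hla (Sum.inl x) c, hla (Sum.inl y) b]
  by_cases hL : ∃ w, S.deltaMul (Sum.inl x) c = some w ∧ S.deltaMul (Sum.inl y) b = some w
  · obtain ⟨w, hxc, hyb⟩ := hL
    rw [hxc, hyb]
    simp only [Option.elim]
    rw [inner_deltaVec_deltaVec, if_pos rfl]
    obtain ⟨e, f, z', r, w', hef, hz', hcr, hbr, hwr⟩ := S.comb_complete hxc hyb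
    rw [Finset.sum_eq_single_of_mem (e, f) ((hfin x y).mem_toFinset.mpr hef)]
    · rw [show S.mul y (e, f).2 = some z' from hz']
      simp only [Option.elim_some]
      exact (term_entry_one hla hcanc hcr hbr hwr).symm
    · intro q hq hqne
      obtain ⟨mq, hxq, hyq, hdq⟩ := (hfin x y).mem_toFinset.mp hq
      rw [show S.mul y q.2 = some mq from hyq]
      simp only [Option.elim_some]
      refine term_entry_zero hla hcanc ?_
      intro r' w'' hc' hb' hw'
      obtain ⟨he, hf⟩ := S.comb_unique ⟨mq, hxq, hyq, hdq⟩ hyq hc' hb' hw' hef hz' hcr hbr hwr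
      exact hqne (Prod.ext he hf)
  · have hLHS : (⟪(S.deltaMul (Sum.inl x) c).elim 0 deltaVec,
        (S.deltaMul (Sum.inl y) b).elim 0 deltaVec⟫ : ℂ) = 0 := by
      cases hxc : S.deltaMul (Sum.inl x) c with
      | none => simp
      | some w1 =>
        cases hyb : S.deltaMul (Sum.inl y) b with
        | none => simp
        | some w2 =>
          simp only [Option.elim_some]
          rw [inner_deltaVec_deltaVec, if_neg]
          intro hww
          exact hL ⟨w2, hww ▸ hxc, hyb⟩
    rw [hLHS]
    symm
    refine Finset.sum_eq_zero fun q hq => ?_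
    obtain ⟨mq, hxq, hyq, hdq⟩ := (hfin x y).mem_toFinset.mp hq
    rw [show S.mul y q.2 = some mq from hyq]
    simp only [Option.elim_some]
    refine term_entry_zero hla hcanc ?_
    intro r' w'' hc' hb' hw'
    obtain ⟨h1, h2⟩ := S.comb_sound ⟨mq, hxq, hyq, hdq⟩ hyq hc' hb' hw'
    exact hL ⟨w'', h1, h2⟩
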